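/- Let T ∈ ℝ^{m×m×m} be a tensor with entries t_{ijk}. Define the m²×m² matrix J₁ with rows indexed by pairs (i,j) and columns indexed by pairs (u,v), with entries J₁((i,j),(u,v)) = δ_{ui} t_{vj1} + δ_{uj} t_{iv1} + δ_{u1} t_{ijv}, where δ is the Kronecker delta and the third index 1 denotes the first index value. If J₁ is invertible, then the stabilizer of T under the congruence action, i.e. the set { X ∈ GL(m,ℝ) : [[T; X, X, X]] = T }, is a finite set. -/

import Mathlib

open Matrix

/-- The congruence action of an `m × m` matrix on an `m × m × m` tensor over `ℝ`. -/
def congrAct3 {m d : ℕ} (T : Fin m → Fin m → Fin m → ℝ)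
    (X : Matrix (Fin d) (Fin m) ℝ) : Fin d → Fin d → Fin d → ℝ :=
  fun α β γ => ∑ i, ∑ j, ∑ k, T i j k * X α i * X β j * X γ k

namespace StabAux

open MvPolynomial

set_option linter.unusedSectionVars false

variable {m : ℕ} [NeZero m]

/-- The slice polynomials: entries `(α,β,0)` of the congruence action minus the target. -/
noncomputable def fpoly (T : Fin m → Fin m → Fin m → ℝ) (p : Fin m × Fin m) :
    MvPolynomial (Fin m × Fin m) ℝ :=
  (∑ i, ∑ j, ∑ k, C (T i j k) * X (p.1, i) * X (p.2, j) * X ((0 : Fin m), k))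
    - C (T p.1 p.2 0)

/-- Linear generators of the maximal ideal at the point `x`. -/
noncomputable def Ypoly (x : Matrix (Fin m) (Fin m) ℝ) (q : Fin m × Fin m) :
    MvPolynomial (Fin m × Fin m) ℝ := X q - C (x q.1 q.2)

/-- The Jacobian matrix of the slice polynomials at the point `x`. -/
noncomputable def Jm (T : Fin m → Fin m → Fin m → ℝ) (x : Matrix (Fin m) (Fin m) ℝ) :
    Matrix (Fin m × Fin m) (Fin m × Fin m) ℝ :=
  Matrix.of fun p q =>
    (if q.1 = p.1 then ∑ j, ∑ k, T q.2 j k * x p.2 j * x 0 k else 0) +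
    (if q.1 = p.2 then ∑ i, ∑ k, T i q.2 k * x p.1 i * x 0 k else 0) +
    (if q.1 = 0 then ∑ i, ∑ j, T i j q.2 * x p.1 i * x p.2 j else 0)

lemma eval_fpoly (T : Fin m → Fin m → Fin m → ℝ) (x : Matrix (Fin m) (Fin m) ℝ)
    (p : Fin m × Fin m) :
    eval (fun q : Fin m × Fin m => x q.1 q.2) (fpoly T p)
      = congrAct3 T x p.1 p.2 0 - T p.1 p.2 0 := by
  simp [fpoly, congrAct3]

lemma sub_C_eval_mem (x : Matrix (Fin m) (Fin m) ℝ) (f : MvPolynomial (Fin m × Fin m) ℝ) :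
    f - C (eval (fun q : Fin m × Fin m => x q.1 q.2) f)
      ∈ Ideal.span (Set.range (Ypoly x)) := by
  induction f using MvPolynomial.induction_on with
  | C a => simp
  | add f g hf hg =>
      have := Ideal.add_mem _ hf hg
      simpa [map_add, add_sub_add_comm] using this
  | mul_X f s hf =>
      have hY : Ypoly x s ∈ Ideal.span (Set.range (Ypoly x)) :=
        Ideal.subset_span ⟨s, rfl⟩
      have : f * X s - C (eval (fun q : Fin m × Fin m => x q.1 q.2) (f * X s))
          = f * (Ypoly x s) +
            C (x s.1 s.2) * (f - C (eval (fun q : Fin m × Fin m => x q.1 q.2) f)) := by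
        simp only [Ypoly, _root_.map_mul, eval_X]
        ring
      rw [this]
      exact Ideal.add_mem _ (Ideal.mul_mem_left _ _ hY) (Ideal.mul_mem_left _ _ hf)

lemma mem_span_Ypoly (x : Matrix (Fin m) (Fin m) ℝ) (f : MvPolynomial (Fin m × Fin m) ℝ)
    (hf : eval (fun q : Fin m × Fin m => x q.1 q.2) f = 0) :
    f ∈ Ideal.span (Set.range (Ypoly x)) := by
  have := sub_C_eval_mem x f
  rwa [hf, map_zero, sub_zero] at this

/-- Taylor expansion of a cubic monomial at the point `x`. -/
lemma cubic_expand (x : Matrix (Fin m) (Fin m) ℝ) (t : ℝ) (a1 a2 b1 b2 c1 c2 : Fin m) :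
    C t * X ((a1, a2) : Fin m × Fin m) * X (b1, b2) * X (c1, c2)
      = C (t * (x a1 a2 * x b1 b2 * x c1 c2))
        + (C (t * (x b1 b2 * x c1 c2)) * Ypoly x (a1, a2)
          + (C (t * (x a1 a2 * x c1 c2)) * Ypoly x (b1, b2)
            + C (t * (x a1 a2 * x b1 b2)) * Ypoly x (c1, c2)))
        + C t * (Ypoly x (a1, a2) * Ypoly x (b1, b2) * Ypoly x (c1, c2)
          + C (x c1 c2) * (Ypoly x (a1, a2) * Ypoly x (b1, b2))
          + C (x b1 b2) * (Ypoly x (a1, a2) * Ypoly x (c1, c2))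
          + C (x a1 a2) * (Ypoly x (b1, b2) * Ypoly x (c1, c2))) := by
  simp only [Ypoly, _root_.map_mul]
  ring

lemma sliceA (T : Fin m → Fin m → Fin m → ℝ) (x : Matrix (Fin m) (Fin m) ℝ)
    (hx : congrAct3 T x = T) (a b : Fin m) :
    ∑ v, (∑ j, ∑ k, T v j k * x b j * x 0 k) * x a v = T a b 0 := by
  have h := congrFun (congrFun (congrFun hx a) b) 0
  rw [← h]
  show _ = ∑ i, ∑ j, ∑ k, T i j k * x a i * x b j * x 0 k
  refine Finset.sum_congr rfl fun v _ => ?_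
  rw [Finset.sum_mul]
  refine Finset.sum_congr rfl fun j _ => ?_
  rw [Finset.sum_mul]
  exact Finset.sum_congr rfl fun k _ => by ring

lemma sliceB (T : Fin m → Fin m → Fin m → ℝ) (x : Matrix (Fin m) (Fin m) ℝ)
    (hx : congrAct3 T x = T) (a b : Fin m) :
    ∑ v, (∑ i, ∑ k, T i v k * x b i * x 0 k) * x a v = T b a 0 := by
  have h := congrFun (congrFun (congrFun hx b) a) 0
  rw [← h]
  show _ = ∑ i, ∑ j, ∑ k, T i j k * x b i * x a j * x 0 k
  have : ∀ v, (∑ i, ∑ k, T i v k * x b i * x 0 k) * x a v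
      = ∑ i, ∑ k, T i v k * x b i * x 0 k * x a v := by
    intro v
    rw [Finset.sum_mul]
    exact Finset.sum_congr rfl fun i _ => by rw [Finset.sum_mul]
  rw [Finset.sum_congr rfl fun v _ => this v, Finset.sum_comm]
  refine Finset.sum_congr rfl fun i _ => Finset.sum_congr rfl fun v _ =>
    Finset.sum_congr rfl fun k _ => by ring

lemma sliceD (T : Fin m → Fin m → Fin m → ℝ) (x : Matrix (Fin m) (Fin m) ℝ)
    (hx : congrAct3 T x = T) (a b c : Fin m) :
    ∑ v, (∑ i, ∑ j, T i j v * x b i * x c j) * x a v = T b c a := by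
  have h := congrFun (congrFun (congrFun hx b) c) a
  rw [← h]
  show _ = ∑ i, ∑ j, ∑ k, T i j k * x b i * x c j * x a k
  have : ∀ v, (∑ i, ∑ j, T i j v * x b i * x c j) * x a v
      = ∑ i, ∑ j, T i j v * x b i * x c j * x a v := by
    intro v
    rw [Finset.sum_mul]
    exact Finset.sum_congr rfl fun i _ => by rw [Finset.sum_mul]
  rw [Finset.sum_congr rfl fun v _ => this v, Finset.sum_comm]
  refine Finset.sum_congr rfl fun i _ => ?_
  rw [Finset.sum_comm]

lemma Jm_mul_K (T : Fin m → Fin m → Fin m → ℝ) (x : Matrix (Fin m) (Fin m) ℝ)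
    (hx : congrAct3 T x = T) :
    Jm T x * (Matrix.of fun a b : Fin m × Fin m => if a.1 = b.1 then x b.2 a.2 else 0)
      = Matrix.of fun p q : Fin m × Fin m =>
        (if q.1 = p.1 then T q.2 p.2 0 else 0) +
        (if q.1 = p.2 then T p.1 q.2 0 else 0) +
        (if q.1 = 0 then T p.1 p.2 q.2 else 0) := by
  ext p q
  rw [Matrix.mul_apply, Fintype.sum_prod_type_right]
  simp only [Jm, Matrix.of_apply, add_mul, ite_mul, zero_mul, Finset.sum_add_distrib,
    Finset.sum_ite_eq', Finset.mem_univ, if_true, mul_ite, mul_zero]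
  congr 1
  · congr 1
    · by_cases h : q.1 = p.1
      · simp only [if_pos h]
        exact sliceA T x hx q.2 p.2
      · simp only [if_neg h, Finset.sum_const_zero]
    · by_cases h : q.1 = p.2
      · simp only [if_pos h]
        exact sliceB T x hx q.2 p.1
      · simp only [if_neg h, Finset.sum_const_zero]
  · by_cases h : q.1 = 0
    · simp only [if_pos h]
      exact sliceD T x hx q.2 p.1 p.2
    · simp only [if_neg h, Finset.sum_const_zero]

lemma isUnit_Jm_det (T : Fin m → Fin m → Fin m → ℝ) (x : Matrix (Fin m) (Fin m) ℝ)
    (hxu : IsUnit x) (hx : congrAct3 T x = T)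
    (hJ : IsUnit (Matrix.of fun p q : Fin m × Fin m =>
      (if q.1 = p.1 then T q.2 p.2 0 else 0) +
      (if q.1 = p.2 then T p.1 q.2 0 else 0) +
      (if q.1 = 0 then T p.1 p.2 q.2 else 0))) :
    IsUnit (Jm T x).det := by
  have hdx : IsUnit x.det := (Matrix.isUnit_iff_isUnit_det x).mp hxu
  have hxinv : x⁻¹ * x = 1 := Matrix.nonsing_inv_mul x hdx
  set K : Matrix (Fin m × Fin m) (Fin m × Fin m) ℝ :=
    Matrix.of fun a b : Fin m × Fin m => if a.1 = b.1 then x b.2 a.2 else 0 with hKdef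
  have hKK : K * (Matrix.of fun a b : Fin m × Fin m => if a.1 = b.1 then x⁻¹ b.2 a.2 else 0)
      = 1 := by
    ext a b
    rw [Matrix.mul_apply, Fintype.sum_prod_type_right]
    simp only [hKdef, Matrix.of_apply, ite_mul, zero_mul, mul_ite, mul_zero,
      Finset.sum_ite_eq, Finset.sum_ite_eq', Finset.mem_univ, if_true]
    by_cases h : a.1 = b.1
    · simp only [if_pos h]
      have : ∑ v, x v a.2 * x⁻¹ b.2 v = (x⁻¹ * x) b.2 a.2 := by
        rw [Matrix.mul_apply]
        exact Finset.sum_congr rfl fun v _ => mul_comm _ _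
      rw [this, hxinv, Matrix.one_apply, Matrix.one_apply]
      by_cases h2 : a.2 = b.2
      · have : a = b := Prod.ext h h2
        simp [this]
      · rw [if_neg (fun hh => h2 hh.symm), if_neg (by
          intro hh; exact h2 (by rw [hh]))]
    · simp only [if_neg h, Finset.sum_const_zero, Matrix.one_apply]
      rw [if_neg (by intro hh; exact h (by rw [hh]))]
  have hKu : IsUnit K.det := by
    have hd : K.det * (Matrix.of fun a b : Fin m × Fin m =>
        if a.1 = b.1 then x⁻¹ b.2 a.2 else 0).det = 1 := by
      rw [← Matrix.det_mul, hKK, Matrix.det_one]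
    exact isUnit_iff_exists_inv.mpr ⟨_, hd⟩
  have h1 := Jm_mul_K T x hx
  have hdJ : IsUnit (Matrix.of fun p q : Fin m × Fin m =>
      (if q.1 = p.1 then T q.2 p.2 0 else 0) +
      (if q.1 = p.2 then T p.1 q.2 0 else 0) +
      (if q.1 = 0 then T p.1 p.2 q.2 else 0)).det := (Matrix.isUnit_iff_isUnit_det _).mp hJ
  rw [← h1, Matrix.det_mul] at hdJ
  exact isUnit_of_mul_isUnit_left hdJ

lemma Jm_linear_sum (T : Fin m → Fin m → Fin m → ℝ) (x : Matrix (Fin m) (Fin m) ℝ)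
    (p : Fin m × Fin m) :
    (∑ q, C (Jm T x p q) * Ypoly x q)
      = (∑ i, ∑ j, ∑ k, C (T i j k * (x p.2 j * x 0 k)) * Ypoly x (p.1, i))
        + ((∑ i, ∑ j, ∑ k, C (T i j k * (x p.1 i * x 0 k)) * Ypoly x (p.2, j))
          + (∑ i, ∑ j, ∑ k, C (T i j k * (x p.1 i * x p.2 j)) * Ypoly x ((0 : Fin m), k))) := by
  rw [Fintype.sum_prod_type_right]
  simp only [Jm, Matrix.of_apply, map_add, add_mul, Finset.sum_add_distrib, apply_ite C,
    map_zero, ite_mul, zero_mul, Finset.sum_ite_eq', Finset.mem_univ, if_true]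
  have e1 : ∑ v, C (∑ j, ∑ k, T v j k * x p.2 j * x 0 k) * Ypoly x (p.1, v)
      = ∑ i, ∑ j, ∑ k, C (T i j k * (x p.2 j * x 0 k)) * Ypoly x (p.1, i) := by
    refine Finset.sum_congr rfl fun v _ => ?_
    rw [map_sum, Finset.sum_mul]
    refine Finset.sum_congr rfl fun j _ => ?_
    rw [map_sum, Finset.sum_mul]
    refine Finset.sum_congr rfl fun k _ => ?_
    rw [mul_assoc]
  have e2 : ∑ v, C (∑ i, ∑ k, T i v k * x p.1 i * x 0 k) * Ypoly x (p.2, v)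
      = ∑ i, ∑ j, ∑ k, C (T i j k * (x p.1 i * x 0 k)) * Ypoly x (p.2, j) := by
    have h1 : ∀ v, C (∑ i, ∑ k, T i v k * x p.1 i * x 0 k) * Ypoly x (p.2, v)
        = ∑ i, ∑ k, C (T i v k * (x p.1 i * x 0 k)) * Ypoly x (p.2, v) := by
      intro v
      rw [map_sum, Finset.sum_mul]
      refine Finset.sum_congr rfl fun i _ => ?_
      rw [map_sum, Finset.sum_mul]
      refine Finset.sum_congr rfl fun k _ => ?_
      rw [mul_assoc]
    rw [Finset.sum_congr rfl fun v _ => h1 v]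
    exact Finset.sum_comm
  have e3 : ∑ v, C (∑ i, ∑ j, T i j v * x p.1 i * x p.2 j) * Ypoly x ((0 : Fin m), v)
      = ∑ i, ∑ j, ∑ k, C (T i j k * (x p.1 i * x p.2 j)) * Ypoly x ((0 : Fin m), k) := by
    have h1 : ∀ v, C (∑ i, ∑ j, T i j v * x p.1 i * x p.2 j) * Ypoly x ((0 : Fin m), v)
        = ∑ i, ∑ j, C (T i j v * (x p.1 i * x p.2 j)) * Ypoly x ((0 : Fin m), v) := by
      intro v
      rw [map_sum, Finset.sum_mul]
      refine Finset.sum_congr rfl fun i _ => ?_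
      rw [map_sum, Finset.sum_mul]
      refine Finset.sum_congr rfl fun j _ => ?_
      rw [mul_assoc]
    rw [Finset.sum_congr rfl fun v _ => h1 v, Finset.sum_comm]
    refine Finset.sum_congr rfl fun i _ => ?_
    rw [Finset.sum_comm]
  rw [e1, e2, e3]
  ring

lemma fpoly_sub_mem (T : Fin m → Fin m → Fin m → ℝ) (x : Matrix (Fin m) (Fin m) ℝ)
    (hx : congrAct3 T x = T) (p : Fin m × Fin m) :
    fpoly T p - (∑ q, C (Jm T x p q) * Ypoly x q)
      ∈ (Ideal.span (Set.range (Ypoly x))) ^ 2 := by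
  have expand : (∑ i, ∑ j, ∑ k, C (T i j k) * X ((p.1, i) : Fin m × Fin m) * X (p.2, j)
        * X ((0 : Fin m), k))
      = (∑ i, ∑ j, ∑ k, C (T i j k * (x p.1 i * x p.2 j * x 0 k)))
        + ((∑ i, ∑ j, ∑ k, C (T i j k * (x p.2 j * x 0 k)) * Ypoly x (p.1, i))
          + ((∑ i, ∑ j, ∑ k, C (T i j k * (x p.1 i * x 0 k)) * Ypoly x (p.2, j))
            + (∑ i, ∑ j, ∑ k, C (T i j k * (x p.1 i * x p.2 j)) * Ypoly x ((0 : Fin m), k))))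
        + ∑ i, ∑ j, ∑ k, C (T i j k) *
            (Ypoly x (p.1, i) * Ypoly x (p.2, j) * Ypoly x ((0 : Fin m), k)
              + C (x 0 k) * (Ypoly x (p.1, i) * Ypoly x (p.2, j))
              + C (x p.2 j) * (Ypoly x (p.1, i) * Ypoly x ((0 : Fin m), k))
              + C (x p.1 i) * (Ypoly x (p.2, j) * Ypoly x ((0 : Fin m), k))) := by
    simp only [← Finset.sum_add_distrib]
    refine Finset.sum_congr rfl fun i _ => Finset.sum_congr rfl fun j _ =>
      Finset.sum_congr rfl fun k _ => ?_
    exact cubic_expand x (T i j k) p.1 i p.2 j 0 k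
  have hconst : (∑ i, ∑ j, ∑ k, (C (T i j k * (x p.1 i * x p.2 j * x 0 k)) :
        MvPolynomial (Fin m × Fin m) ℝ))
      = C (T p.1 p.2 0) := by
    simp only [← map_sum]
    congr 1
    have h := congrFun (congrFun (congrFun hx p.1) p.2) 0
    rw [← h]
    show _ = ∑ i, ∑ j, ∑ k, T i j k * x p.1 i * x p.2 j * x 0 k
    exact Finset.sum_congr rfl fun i _ => Finset.sum_congr rfl fun j _ =>
      Finset.sum_congr rfl fun k _ => by ring
  have key : fpoly T p - (∑ q, C (Jm T x p q) * Ypoly x q)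
      = ∑ i, ∑ j, ∑ k, C (T i j k) *
            (Ypoly x (p.1, i) * Ypoly x (p.2, j) * Ypoly x ((0 : Fin m), k)
              + C (x 0 k) * (Ypoly x (p.1, i) * Ypoly x (p.2, j))
              + C (x p.2 j) * (Ypoly x (p.1, i) * Ypoly x ((0 : Fin m), k))
              + C (x p.1 i) * (Ypoly x (p.2, j) * Ypoly x ((0 : Fin m), k))) := by
    rw [fpoly, expand, hconst, Jm_linear_sum T x p]
    ring
  rw [key]
  have hYY : ∀ a b : Fin m × Fin m,
      Ypoly x a * Ypoly x b ∈ (Ideal.span (Set.range (Ypoly x))) ^ 2 := by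
    intro a b
    rw [sq]
    exact Ideal.mul_mem_mul (Ideal.subset_span ⟨a, rfl⟩) (Ideal.subset_span ⟨b, rfl⟩)
  refine Ideal.sum_mem _ fun i _ => Ideal.sum_mem _ fun j _ => Ideal.sum_mem _ fun k _ => ?_
  refine Ideal.mul_mem_left _ _ ?_
  refine Ideal.add_mem _ (Ideal.add_mem _ (Ideal.add_mem _ ?_ ?_) ?_) ?_
  · exact Ideal.mul_mem_right _ _ (hYY _ _)
  · exact Ideal.mul_mem_left _ _ (hYY _ _)
  · exact Ideal.mul_mem_left _ _ (hYY _ _)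
  · exact Ideal.mul_mem_left _ _ (hYY _ _)

lemma Ypoly_mem (T : Fin m → Fin m → Fin m → ℝ) (x : Matrix (Fin m) (Fin m) ℝ)
    (hx : congrAct3 T x = T) (hJm : IsUnit (Jm T x).det) (q : Fin m × Fin m) :
    Ypoly x q ∈ Ideal.span (Set.range (fpoly T)) ⊔ (Ideal.span (Set.range (Ypoly x))) ^ 2 := by
  have hcJ : (Jm T x)⁻¹ * Jm T x = 1 := Matrix.nonsing_inv_mul _ hJm
  have key : Ypoly x q = (∑ p, C ((Jm T x)⁻¹ q p) * fpoly T p)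
      - ∑ p, C ((Jm T x)⁻¹ q p) * (fpoly T p - ∑ q', C (Jm T x p q') * Ypoly x q') := by
    rw [← Finset.sum_sub_distrib]
    have h1 : ∀ p, C ((Jm T x)⁻¹ q p) * fpoly T p
        - C ((Jm T x)⁻¹ q p) * (fpoly T p - ∑ q', C (Jm T x p q') * Ypoly x q')
        = C ((Jm T x)⁻¹ q p) * ∑ q', C (Jm T x p q') * Ypoly x q' := fun p => by ring
    rw [Finset.sum_congr rfl fun p _ => h1 p]
    have h2 : ∀ p, C ((Jm T x)⁻¹ q p) * ∑ q', C (Jm T x p q') * Ypoly x q'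
        = ∑ q', C ((Jm T x)⁻¹ q p * Jm T x p q') * Ypoly x q' := by
      intro p
      rw [Finset.mul_sum]
      refine Finset.sum_congr rfl fun q' _ => ?_
      rw [← mul_assoc, ← _root_.map_mul]
    rw [Finset.sum_congr rfl fun p _ => h2 p, Finset.sum_comm]
    have h3 : ∀ q', ∑ p, C ((Jm T x)⁻¹ q p * Jm T x p q') * Ypoly x q'
        = C ((1 : Matrix (Fin m × Fin m) (Fin m × Fin m) ℝ) q q') * Ypoly x q' := by
      intro q'
      rw [← Finset.sum_mul, ← map_sum, ← Matrix.mul_apply, hcJ]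
    rw [Finset.sum_congr rfl fun q' _ => h3 q']
    simp [Matrix.one_apply, apply_ite C, ite_mul, Finset.sum_ite_eq]
  rw [key]
  refine Submodule.sub_mem _ (Ideal.mem_sup_left ?_) (Ideal.mem_sup_right ?_)
  · exact Ideal.sum_mem _ fun p _ => Ideal.mul_mem_left _ _ (Ideal.subset_span ⟨p, rfl⟩)
  · exact Ideal.sum_mem _ fun p _ => Ideal.mul_mem_left _ _ (fpoly_sub_mem T x hx p)

lemma map_ker_mem_minimalPrimes (T : Fin m → Fin m → Fin m → ℝ)
    (x : Matrix (Fin m) (Fin m) ℝ) (hxu : IsUnit x) (hx : congrAct3 T x = T)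
    (hJm : IsUnit (Jm T x).det) :
    Ideal.map (Ideal.Quotient.mk (Ideal.span (Set.range (fpoly T))))
        (RingHom.ker (eval fun q : Fin m × Fin m => x q.1 q.2))
      ∈ minimalPrimes (MvPolynomial (Fin m × Fin m) ℝ ⧸ Ideal.span (Set.range (fpoly T))) := by
  set I : Ideal (MvPolynomial (Fin m × Fin m) ℝ) := Ideal.span (Set.range (fpoly T)) with hIdef
  set Mx : Ideal (MvPolynomial (Fin m × Fin m) ℝ) :=
    RingHom.ker (eval fun q : Fin m × Fin m => x q.1 q.2) with hMdef
  set 𝔪 : Ideal (MvPolynomial (Fin m × Fin m) ℝ ⧸ I) := Ideal.map (Ideal.Quotient.mk I) Mx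
    with hmdef
  have hIle : I ≤ Mx := by
    rw [hIdef, Ideal.span_le]
    rintro _ ⟨p, rfl⟩
    rw [SetLike.mem_coe, RingHom.mem_ker, eval_fpoly, hx, sub_self]
  haveI hMp : Mx.IsPrime := RingHom.ker_isPrime _
  have hmprime : 𝔪.IsPrime :=
    Ideal.map_isPrime_of_surjective Ideal.Quotient.mk_surjective
      (by rw [Ideal.mk_ker]; exact hIle)
  -- the image of the span of the `Ypoly` lies in `𝔪`
  have hmapMM : Ideal.map (Ideal.Quotient.mk I) (Ideal.span (Set.range (Ypoly x))) ≤ 𝔪 := by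
    refine Ideal.map_mono (Ideal.span_le.mpr ?_)
    rintro _ ⟨q, rfl⟩
    rw [SetLike.mem_coe, RingHom.mem_ker]
    simp [Ypoly]
  -- each generator of `𝔪` lies in `𝔪 ^ 2`
  have hgen : ∀ q : Fin m × Fin m, Ideal.Quotient.mk I (Ypoly x q) ∈ 𝔪 ^ 2 := by
    intro q
    obtain ⟨a, haI, b, hb, hab⟩ := Submodule.mem_sup.mp (Ypoly_mem T x hx hJm q)
    rw [← hab, map_add, Ideal.Quotient.eq_zero_iff_mem.mpr haI, zero_add]
    have h1 : Ideal.Quotient.mk I b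
        ∈ (Ideal.map (Ideal.Quotient.mk I) (Ideal.span (Set.range (Ypoly x)))) ^ 2 := by
      have := Ideal.mem_map_of_mem (Ideal.Quotient.mk I) hb
      rwa [Ideal.map_pow] at this
    have h2 : (Ideal.map (Ideal.Quotient.mk I) (Ideal.span (Set.range (Ypoly x)))) ^ 2
        ≤ 𝔪 ^ 2 := by
      rw [sq, sq]
      exact Ideal.mul_mono hmapMM hmapMM
    exact h2 h1
  have hsq : 𝔪 ≤ 𝔪 ^ 2 := by
    intro y hy
    obtain ⟨a, haM, rfl⟩ :=
      (Ideal.mem_map_iff_of_surjective _ Ideal.Quotient.mk_surjective).mp hy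
    have haMM : a ∈ Ideal.span (Set.range (Ypoly x)) :=
      mem_span_Ypoly x a (RingHom.mem_ker.mp haM)
    have h1 : Ideal.Quotient.mk I a
        ∈ Ideal.map (Ideal.Quotient.mk I) (Ideal.span (Set.range (Ypoly x))) :=
      Ideal.mem_map_of_mem _ haMM
    rw [Ideal.map_span] at h1
    refine Ideal.span_le.mpr ?_ h1
    rintro _ ⟨_, ⟨q, rfl⟩, rfl⟩
    exact hgen q
  have hfg : 𝔪.FG := IsNoetherian.noetherian _
  obtain ⟨r, hr1, hr0⟩ :=
    Submodule.exists_sub_one_mem_and_smul_eq_zero_of_fg_of_le_smul 𝔪 𝔪 hfg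
      (by rw [Ideal.smul_eq_mul]; exact le_trans hsq (le_of_eq (sq 𝔪)))
  refine ⟨⟨hmprime, bot_le⟩, ?_⟩
  rintro p ⟨hp, -⟩ hple
  intro y hy
  have h0 : r * y = 0 := by
    have := hr0 y hy
    rwa [smul_eq_mul] at this
  have hrp : r ∉ p := by
    intro hrp
    have h1m : (1 : MvPolynomial (Fin m × Fin m) ℝ ⧸ I) ∈ 𝔪 := by
      have := 𝔪.sub_mem (hple hrp) hr1
      simpa using this
    exact hmprime.ne_top ((Ideal.eq_top_iff_one _).mpr h1m)
  have hmem : r * y ∈ p := h0 ▸ p.zero_mem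
  exact (hp.mem_or_mem hmem).resolve_left hrp

theorem main_aux (T : Fin m → Fin m → Fin m → ℝ)
    (hJ : IsUnit (Matrix.of fun p q : Fin m × Fin m =>
      (if q.1 = p.1 then T q.2 p.2 0 else 0) +
      (if q.1 = p.2 then T p.1 q.2 0 else 0) +
      (if q.1 = 0 then T p.1 p.2 q.2 else 0))) :
    {X : Matrix (Fin m) (Fin m) ℝ | IsUnit X ∧ congrAct3 T X = T}.Finite := by
  classical
  set I : Ideal (MvPolynomial (Fin m × Fin m) ℝ) := Ideal.span (Set.range (fpoly T)) with hIdef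
  have hfin : (minimalPrimes (MvPolynomial (Fin m × Fin m) ℝ ⧸ I)).Finite :=
    minimalPrimes.finite_of_isNoetherianRing _
  set φ : Matrix (Fin m) (Fin m) ℝ → Ideal (MvPolynomial (Fin m × Fin m) ℝ ⧸ I) :=
    fun x => Ideal.map (Ideal.Quotient.mk I)
      (RingHom.ker (eval fun q : Fin m × Fin m => x q.1 q.2)) with hphi
  refine Set.Finite.of_finite_image (f := φ) (hfin.subset ?_) ?_
  · rintro _ ⟨x, ⟨hxu, hx⟩, rfl⟩
    exact map_ker_mem_minimalPrimes T x hxu hx (isUnit_Jm_det T x hxu hx hJ)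
  · rintro x ⟨hxu, hx⟩ y ⟨hyu, hy⟩ hxy
    have hIle : ∀ z : Matrix (Fin m) (Fin m) ℝ, congrAct3 T z = T →
        I ≤ RingHom.ker (eval fun q : Fin m × Fin m => z q.1 q.2) := by
      intro z hz
      rw [hIdef, Ideal.span_le]
      rintro _ ⟨p, rfl⟩
      rw [SetLike.mem_coe, RingHom.mem_ker, eval_fpoly, hz, sub_self]
    have hcomap : ∀ z : Matrix (Fin m) (Fin m) ℝ, congrAct3 T z = T →
        Ideal.comap (Ideal.Quotient.mk I) (φ z)
          = RingHom.ker (eval fun q : Fin m × Fin m => z q.1 q.2) := by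
      intro z hz
      rw [hphi]
      rw [Ideal.comap_map_of_surjective _ Ideal.Quotient.mk_surjective,
        ← RingHom.ker_eq_comap_bot, Ideal.mk_ker, sup_eq_left.mpr (hIle z hz)]
    have hker : RingHom.ker (eval fun q : Fin m × Fin m => x q.1 q.2)
        = RingHom.ker (eval fun q : Fin m × Fin m => y q.1 q.2) := by
      rw [← hcomap x hx, ← hcomap y hy, hxy]
    ext u v
    have h1 : Ypoly x (u, v) ∈ RingHom.ker (eval fun q : Fin m × Fin m => x q.1 q.2) := by
      rw [RingHom.mem_ker]
      simp [Ypoly]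
    rw [hker, RingHom.mem_ker] at h1
    simp only [Ypoly, map_sub, eval_X, eval_C] at h1
    linarith [h1]

end StabAux

/-- The Jacobian criterion: if the `m² × m²` matrix `J₁` with entries
`J₁((i,j),(u,v)) = δ_{ui} t_{vj1} + δ_{uj} t_{iv1} + δ_{u1} t_{ijv}` is invertible,
then the stabilizer of `T` under the congruence action is finite. -/
theorem stabilizer_finite_of_J1_invertible (m : ℕ) [NeZero m]
    (T : Fin m → Fin m → Fin m → ℝ)
    (hJ : IsUnit (Matrix.of fun p q : Fin m × Fin m =>
      (if q.1 = p.1 then T q.2 p.2 0 else 0) +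
      (if q.1 = p.2 then T p.1 q.2 0 else 0) +
      (if q.1 = 0 then T p.1 p.2 q.2 else 0))) :
    {X : Matrix (Fin m) (Fin m) ℝ | IsUnit X ∧ congrAct3 T X = T}.Finite :=
  StabAux.main_aux T hJ
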